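/- Let X_1, ..., X_n be independent standard Cauchy random variables. There exists a universal constant U_1 such that for all n ≥ 3, Pr[Σ_{i=1}^n |X_i| ≤ U_1 · n · log n] ≥ 1 − (log log n)/(log n). -/

import Mathlib

open MeasureTheory ProbabilityTheory Finset

open scoped NNReal ENNReal

/-- The standard Cauchy distribution on ℝ, with density `1/(π(1+x²))`. -/
noncomputable def stdCauchy : Measure ℝ :=
  MeasureTheory.volume.withDensity fun x => ENNReal.ofReal (1 / (Real.pi * (1 + x ^ 2)))

namespace CauchyAux

open Real Set

noncomputable def dens (x : ℝ) : ℝ := 1 / (Real.pi * (1 + x ^ 2))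

lemma dens_pos (x : ℝ) : 0 < dens x := by
  have : (0:ℝ) < 1 + x ^ 2 := by positivity
  exact div_pos one_pos (by positivity)

lemma dens_eq (x : ℝ) : dens x = (1 / π) * (1 + x ^ 2)⁻¹ := by
  rw [dens]; rw [one_div, one_div, mul_inv]

lemma continuous_dens : Continuous dens := by
  simp only [funext dens_eq]
  apply Continuous.mul continuous_const
  apply Continuous.inv₀ (by continuity)
  intro x; positivity

lemma integrable_dens : Integrable dens := by
  simp only [funext dens_eq]
  exact integrable_inv_one_add_sq.const_mul _

noncomputable def densNN (x : ℝ) : ℝ≥0 := Real.toNNReal (dens x)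

lemma measurable_densNN : Measurable densNN :=
  (continuous_real_toNNReal.comp continuous_dens).measurable

lemma stdCauchy_eq : stdCauchy = MeasureTheory.volume.withDensity fun x => (densNN x : ℝ≥0∞) :=
  rfl

lemma integral_stdCauchy (g : ℝ → ℝ) :
    ∫ x, g x ∂stdCauchy = ∫ x, dens x * g x := by
  rw [stdCauchy_eq, integral_withDensity_eq_integral_smul measurable_densNN]
  congr 1
  ext x
  rw [NNReal.smul_def, smul_eq_mul, densNN, Real.coe_toNNReal _ (dens_pos x).le]

lemma arctan_le_self' {t : ℝ} (ht : 0 ≤ t) : arctan t ≤ t := by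
  rcases eq_or_lt_of_le ht with h | h
  · simp [← h]
  · have h1 : 0 < arctan t := by
      rw [← Real.arctan_zero]; exact Real.arctan_strictMono h
    have := Real.lt_tan h1 (arctan_lt_pi_div_two t)
    rw [tan_arctan] at this
    linarith

lemma tail_integral_le {K : ℝ} (hK : 1 ≤ K) : ∫ x in {x : ℝ | K < |x|}, dens x ≤ 1 / K := by
  have hK0 : (0:ℝ) < K := lt_of_lt_of_le one_pos hK
  have htail : {x : ℝ | K < |x|} = Iio (-K) ∪ Ioi K := by
    ext x
    simp only [mem_setOf_eq, mem_union, Set.mem_Iio, Set.mem_Ioi, lt_abs]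
    constructor
    · rintro (h | h)
      · right; exact h
      · left; linarith
    · rintro (h | h)
      · right; linarith
      · left; exact h
  rw [htail]
  rw [setIntegral_union ((Set.Iio_disjoint_Ici (le_refl (-K))).mono_right
      (Set.Ioi_subset_Ici (by linarith))) measurableSet_Ioi
    integrable_dens.integrableOn integrable_dens.integrableOn]
  simp only [funext dens_eq]
  rw [MeasureTheory.integral_const_mul, MeasureTheory.integral_const_mul]
  rw [integral_Ioi_inv_one_add_sq]
  have hIio : ∫ x in Iio (-K), (1 + x ^ 2)⁻¹ = π / 2 - arctan K := by
    rw [← integral_Iic_eq_integral_Iio, integral_Iic_inv_one_add_sq, arctan_neg]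
    ring
  rw [hIio]
  have harc : π / 2 - arctan K = arctan K⁻¹ := (arctan_inv_of_pos hK0).symm
  have h2 : arctan K⁻¹ ≤ K⁻¹ := arctan_le_self' (by positivity)
  have hpi : (2:ℝ) ≤ π := two_le_pi
  have h3 : (0:ℝ) < π := pi_pos
  rw [harc]
  have h4 : 0 ≤ arctan K⁻¹ := by
    rw [← Real.arctan_zero]; exact Real.arctan_strictMono.monotone (by positivity)
  have h5 : 1/π ≤ 1/2 := by
    apply one_div_le_one_div_of_le two_pos hpi
  have h6 : (1/π) * arctan K⁻¹ ≤ (1/2) * K⁻¹ := by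
    apply mul_le_mul h5 h2 h4 (by norm_num)
  have h7 : K⁻¹ = 1/K := (one_div K).symm
  linarith

lemma tail_measure_le {K : ℝ} (hK : 1 ≤ K) :
    stdCauchy {x : ℝ | K < |x|} ≤ ENNReal.ofReal (1 / K) := by
  have hs : MeasurableSet {x : ℝ | K < |x|} :=
    measurableSet_lt measurable_const continuous_abs.measurable
  rw [stdCauchy, withDensity_apply _ hs]
  have h1 : ∫⁻ x in {x : ℝ | K < |x|}, ENNReal.ofReal (dens x) =
      ENNReal.ofReal (∫ x in {x : ℝ | K < |x|}, dens x) :=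
    (MeasureTheory.ofReal_integral_eq_lintegral_ofReal integrable_dens.integrableOn
      (ae_of_all _ fun x => (dens_pos x).le)).symm
  calc ∫⁻ x in {x : ℝ | K < |x|}, ENNReal.ofReal (1 / (Real.pi * (1 + x ^ 2)))
      = ENNReal.ofReal (∫ x in {x : ℝ | K < |x|}, dens x) := h1
    _ ≤ ENNReal.ofReal (1 / K) := ENNReal.ofReal_le_ofReal (tail_integral_le hK)

lemma compl_Icc (K : ℝ) : (Icc (-K) K)ᶜ = {x : ℝ | K < |x|} := by
  ext x
  simp only [mem_compl_iff, Set.mem_Icc, mem_setOf_eq, not_and_or, not_le, lt_abs]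
  constructor
  · rintro (h | h)
    · right; linarith
    · left; exact h
  · rintro (h | h)
    · right; exact h
    · left; linarith

lemma continuous_min_abs (K : ℝ) : Continuous (fun x : ℝ => min |x| K) :=
  continuous_abs.min continuous_const

lemma min_abs_nonneg (K : ℝ) (x : ℝ) (hK : 0 ≤ K) : 0 ≤ min |x| K :=
  le_min (abs_nonneg x) hK

lemma integrable_dens_mul_pow {K : ℝ} (hK : 0 ≤ K) (j : ℕ) :
    Integrable (fun x => dens x * (min |x| K) ^ j) := by
  apply Integrable.mono' (integrable_dens.const_mul (K ^ j))
  · exact ((continuous_dens.mul ((continuous_min_abs K).pow j))).aestronglyMeasurable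
  · filter_upwards with x
    rw [Real.norm_eq_abs, abs_of_nonneg (mul_nonneg (dens_pos x).le
      (pow_nonneg (min_abs_nonneg K x hK) j))]
    rw [mul_comm (K ^ j) (dens x)]
    apply mul_le_mul_of_nonneg_left _ (dens_pos x).le
    exact pow_le_pow_left₀ (min_abs_nonneg K x hK) (min_le_right _ _) j

lemma hasDerivAt_log_one_add_sq (x : ℝ) :
    HasDerivAt (fun y : ℝ => (1 / (2 * π)) * Real.log (1 + y ^ 2)) (dens x * x) x := by
  have h1 : HasDerivAt (fun y : ℝ => 1 + y ^ 2) (2 * x) x := by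
    simpa using (hasDerivAt_pow 2 x).const_add 1
  have h2 : HasDerivAt (fun y : ℝ => Real.log (1 + y ^ 2)) ((1 + x ^ 2)⁻¹ * (2 * x)) x :=
    (Real.hasDerivAt_log (by positivity)).comp x h1
  have h3 := h2.const_mul (1 / (2 * π))
  refine h3.congr_deriv ?_
  rw [dens]
  have hpi : (0:ℝ) < π := pi_pos
  have hx : (0:ℝ) < 1 + x ^ 2 := by positivity
  field_simp

lemma intervalIntegral_dens_mul (a b : ℝ) :
    ∫ x in a..b, dens x * x =
      (1 / (2 * π)) * Real.log (1 + b ^ 2) - (1 / (2 * π)) * Real.log (1 + a ^ 2) := by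
  apply intervalIntegral.integral_eq_sub_of_hasDerivAt
  · exact fun x _ => hasDerivAt_log_one_add_sq x
  · exact ((continuous_dens.mul continuous_id).intervalIntegrable a b)

lemma moment1_le {K : ℝ} (hK : 1 ≤ K) :
    ∫ x, dens x * min |x| K ≤ (1 / π) * Real.log (1 + K ^ 2) + 1 := by
  have hK0 : (0:ℝ) < K := lt_of_lt_of_le one_pos hK
  have hint := integrable_dens_mul_pow hK0.le 1
  simp only [pow_one] at hint
  rw [← integral_add_compl (measurableSet_Icc : MeasurableSet (Icc (-K) K)) hint]
  have hpiece1 : ∫ x in Icc (-K) K, dens x * min |x| K ≤ (1 / π) * Real.log (1 + K ^ 2) := by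
    have hcongr : ∀ x ∈ Icc (-K) K, dens x * min |x| K = dens x * |x| := by
      intro x hx
      rw [min_eq_left (abs_le.mpr ⟨hx.1, hx.2⟩)]
    rw [setIntegral_congr_fun measurableSet_Icc hcongr]
    have hsplit : Icc (-K) 0 ∪ Ioc 0 K = Icc (-K) K :=
      Set.Icc_union_Ioc_eq_Icc (by linarith) hK0.le
    rw [← hsplit, setIntegral_union (f := fun x => dens x * |x|) _ measurableSet_Ioc
      ((continuous_dens.mul continuous_abs : Continuous fun x => dens x * |x|).integrableOn_Icc)
      ((continuous_dens.mul continuous_abs : Continuous fun x => dens x * |x|).integrableOn_Ioc)]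
    · -- compute both
      have hneg : ∫ x in Icc (-K) 0, dens x * |x| = (1/(2*π)) * Real.log (1 + K ^ 2) := by
        rw [setIntegral_congr_fun measurableSet_Icc
          (fun x hx => by rw [abs_of_nonpos hx.2] :
            ∀ x ∈ Icc (-K) 0, dens x * |x| = dens x * (-x))]
        rw [MeasureTheory.integral_Icc_eq_integral_Ioc,
          ← intervalIntegral.integral_of_le (by linarith : -K ≤ 0)]
        have : ∀ x, dens x * (-x) = -(dens x * x) := fun x => by ring
        simp only [this]
        rw [intervalIntegral.integral_neg, intervalIntegral_dens_mul]
        simp [Real.log_one]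
      have hpos : ∫ x in Ioc 0 K, dens x * |x| = (1/(2*π)) * Real.log (1 + K ^ 2) := by
        rw [setIntegral_congr_fun measurableSet_Ioc
          (fun x hx => by rw [abs_of_pos hx.1] : ∀ x ∈ Ioc 0 K, dens x * |x| = dens x * x)]
        rw [← intervalIntegral.integral_of_le hK0.le, intervalIntegral_dens_mul]
        simp [Real.log_one]
      rw [hneg, hpos]
      have : (0:ℝ) < π := pi_pos
      rw [← two_mul]
      apply le_of_eq
      field_simp
    · -- disjoint
      apply Set.disjoint_left.mpr
      rintro x ⟨_, h2⟩ ⟨h3, _⟩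
      linarith
  have hpiece2 : ∫ x in (Icc (-K) K)ᶜ, dens x * min |x| K ≤ 1 := by
    rw [compl_Icc]
    have hcongr : ∀ x ∈ {x : ℝ | K < |x|}, dens x * min |x| K = K * dens x := by
      intro x hx
      rw [min_eq_right (le_of_lt hx)]
      ring
    rw [setIntegral_congr_fun (measurableSet_lt measurable_const continuous_abs.measurable) hcongr]
    rw [MeasureTheory.integral_const_mul]
    calc K * ∫ x in {x : ℝ | K < |x|}, dens x ≤ K * (1 / K) :=
          mul_le_mul_of_nonneg_left (tail_integral_le hK) hK0.le
      _ = 1 := by field_simp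
  linarith

lemma moment2_le {K : ℝ} (hK : 1 ≤ K) :
    ∫ x, dens x * (min |x| K) ^ 2 ≤ 2 * K := by
  have hK0 : (0:ℝ) < K := lt_of_lt_of_le one_pos hK
  have hpi : (0:ℝ) < π := pi_pos
  have h2pi : (2:ℝ) ≤ π := two_le_pi
  have hint := integrable_dens_mul_pow hK0.le 2
  rw [← integral_add_compl (measurableSet_Icc : MeasurableSet (Icc (-K) K)) hint]
  have hpiece1 : ∫ x in Icc (-K) K, dens x * (min |x| K) ^ 2 ≤ K := by
    have hle : ∀ x ∈ Icc (-K) K, dens x * (min |x| K) ^ 2 ≤ 1 / π := by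
      intro x hx
      rw [min_eq_left (abs_le.mpr ⟨hx.1, hx.2⟩), sq_abs, dens]
      rw [div_mul_eq_mul_div, one_mul, div_le_div_iff₀ (by positivity) hpi]
      nlinarith [sq_nonneg x]
    calc ∫ x in Icc (-K) K, dens x * (min |x| K) ^ 2
        ≤ ∫ _x in Icc (-K) K, (1 / π) := by
          apply setIntegral_mono_on hint.integrableOn (Iff.mpr integrableOn_const_iff _)
            measurableSet_Icc hle
          right; rw [Real.volume_Icc]; exact ENNReal.ofReal_lt_top
      _ = (volume (Icc (-K) K)).toReal * (1 / π) := by rw [setIntegral_const]; rfl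
      _ ≤ (2 * K) * (1 / π) := by
          apply mul_le_mul_of_nonneg_right _ (by positivity)
          rw [Real.volume_Icc, ENNReal.toReal_ofReal (by linarith)]
          linarith
      _ ≤ K := by
          rw [mul_one_div, div_le_iff₀ hpi]
          nlinarith
  have hpiece2 : ∫ x in (Icc (-K) K)ᶜ, dens x * (min |x| K) ^ 2 ≤ K := by
    rw [compl_Icc]
    have hcongr : ∀ x ∈ {x : ℝ | K < |x|}, dens x * (min |x| K) ^ 2 = K ^ 2 * dens x := by
      intro x hx
      rw [min_eq_right (le_of_lt hx)]
      ring
    rw [setIntegral_congr_fun (measurableSet_lt measurable_const continuous_abs.measurable) hcongr]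
    rw [MeasureTheory.integral_const_mul]
    calc K ^ 2 * ∫ x in {x : ℝ | K < |x|}, dens x ≤ K ^ 2 * (1 / K) :=
          mul_le_mul_of_nonneg_left (tail_integral_le hK) (by positivity)
      _ = K := by field_simp
  linarith

lemma one_sub_inv_le_log {x : ℝ} (hx : 0 < x) : 1 - 1/x ≤ Real.log x := by
  have h := Real.log_le_sub_one_of_pos (show (0:ℝ) < x⁻¹ by positivity)
  rw [Real.log_inv] at h
  have : x⁻¹ = 1/x := (one_div x).symm
  linarith [h]

lemma stdCauchy_ne_zero : stdCauchy ≠ 0 := by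
  intro h
  have h1 : stdCauchy (Icc (0:ℝ) 1) = 0 := by rw [h]; rfl
  have h2 : ENNReal.ofReal (1/(2*π)) * volume (Icc (0:ℝ) 1) ≤ stdCauchy (Icc (0:ℝ) 1) := by
    rw [stdCauchy, withDensity_apply _ measurableSet_Icc]
    calc ENNReal.ofReal (1/(2*π)) * volume (Icc (0:ℝ) 1)
        = ∫⁻ _x in Icc (0:ℝ) 1, ENNReal.ofReal (1/(2*π)) := by
          rw [setLIntegral_const]
      _ ≤ ∫⁻ x in Icc (0:ℝ) 1, ENNReal.ofReal (1 / (Real.pi * (1 + x ^ 2))) := by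
          apply setLIntegral_mono (by measurability)
          intro x hx
          apply ENNReal.ofReal_le_ofReal
          have hx2 : x ^ 2 ≤ 1 := by
            rcases hx with ⟨h0, h1'⟩
            nlinarith
          have hpi : (0:ℝ) < π := pi_pos
          apply div_le_div_of_nonneg_left one_pos.le (by positivity)
          nlinarith
  rw [h1] at h2
  have hvol : volume (Icc (0:ℝ) 1) = 1 := by
    rw [Real.volume_Icc]; norm_num
  rw [hvol, mul_one] at h2
  have : (0:ℝ) < 1/(2*π) := by positivity
  simp only [nonpos_iff_eq_zero, ENNReal.ofReal_eq_zero] at h2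
  linarith

end CauchyAux

set_option maxHeartbeats 2000000 in
/-- Upper tail bound for sums of absolute values of independent standard Cauchy
random variables: there is a universal constant `U` such that for all `n ≥ 3`,
`Pr[∑ |X_i| ≤ U n log n] ≥ 1 - (log log n)/(log n)`. -/
theorem indep_cauchy_sum_upper :
    ∃ U : ℝ, 0 < U ∧
      ∀ {Ω : Type} {mΩ : MeasurableSpace Ω} (μ : Measure Ω), IsProbabilityMeasure μ →
        ∀ n : ℕ, 3 ≤ n →
          ∀ X : Fin n → Ω → ℝ,
            iIndepFun X μ →
            (∀ i, Measure.map (X i) μ = stdCauchy) →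
            ENNReal.ofReal (1 - Real.log (Real.log n) / Real.log n) ≤
              μ {ω | ∑ i, |X i ω| ≤ U * n * Real.log n} := by
  classical
  refine ⟨400, by norm_num, ?_⟩
  intro Ω mΩ μ hμ n hn X hind hmap
  haveI := hμ
  set L : ℝ := Real.log n with hLdef
  -- basic numeric facts
  have hn3 : (3:ℝ) ≤ (n:ℝ) := by exact_mod_cast hn
  have hn0 : (0:ℝ) < (n:ℝ) := by linarith
  have hlog3 : (1.02:ℝ) ≤ Real.log 3 := by
    have l2 : (0.6931471803:ℝ) < Real.log 2 := Real.log_two_gt_d9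
    have l15 : (1:ℝ) - 1/(1.5:ℝ) ≤ Real.log 1.5 :=
      CauchyAux.one_sub_inv_le_log (by norm_num)
    have l3 : Real.log 3 = Real.log 2 + Real.log 1.5 := by
      rw [← Real.log_mul (by norm_num) (by norm_num)]
      norm_num
    rw [l3]
    norm_num at l15 ⊢
    linarith
  have hL3 : Real.log 3 ≤ L := Real.log_le_log (by norm_num) hn3
  have hL : (1.02:ℝ) ≤ L := le_trans hlog3 hL3
  have hL1 : (1:ℝ) ≤ L := by linarith
  have hL0 : (0:ℝ) < L := by linarith
  have hLn : L ≤ (n:ℝ) := by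
    have := Real.log_le_sub_one_of_pos hn0
    linarith
  set K : ℝ := 400 * n * L with hKdef
  have hK1 : (1:ℝ) ≤ K := by nlinarith
  have hK0 : (0:ℝ) < K := lt_of_lt_of_le one_pos hK1
  -- measurability of the random variables
  have hae : ∀ i, AEMeasurable (X i) μ := by
    intro i
    apply aemeasurable_of_map_neZero
    rw [hmap i]
    exact ⟨CauchyAux.stdCauchy_ne_zero⟩
  -- truncated variables
  set g : ℝ → ℝ := fun x => min |x| K with hgdef
  have hgc : Continuous g := CauchyAux.continuous_min_abs K
  have hg : Measurable g := hgc.measurable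
  set Y : Fin n → Ω → ℝ := fun i => g ∘ X i with hYdef
  have hYm : ∀ i, AEStronglyMeasurable (Y i) μ := fun i =>
    (hg.comp_aemeasurable (hae i)).aestronglyMeasurable
  have hYb : ∀ i, ∀ ω, ‖Y i ω‖ ≤ K := by
    intro i ω
    have h0 : Y i ω = min |X i ω| K := rfl
    rw [Real.norm_eq_abs, h0, abs_of_nonneg (CauchyAux.min_abs_nonneg K _ hK0.le)]
    exact min_le_right _ _
  have hY2 : ∀ i, MemLp (Y i) 2 μ := fun i =>
    (memLp_top_of_bound (hYm i) K (ae_of_all _ (hYb i))).mono_exponent le_top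
  have hYind : iIndepFun Y μ :=
    hind.comp (fun _ => g) (fun _ => hg)
  -- moments of each truncated variable
  have hmom1 : ∀ i, μ[Y i] ≤ 7 * L := by
    intro i
    have h1 : μ[Y i] = ∫ x, g x ∂stdCauchy := by
      rw [← hmap i]
      exact (integral_map (hae i) (hgc.aestronglyMeasurable)).symm
    rw [h1, CauchyAux.integral_stdCauchy g]
    have h2 := CauchyAux.moment1_le hK1
    have hlogK : Real.log (1 + K ^ 2) ≤ 16 * L := by
      have hKn : 1 + K ^ 2 ≤ ((n:ℝ)) ^ 16 := by
        have hKn2 : K ≤ 400 * (n:ℝ)^2 := by nlinarith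
        have h4 : (3:ℝ)^6 ≤ (n:ℝ)^6 := by
          apply pow_le_pow_left₀ (by norm_num) hn3
        calc 1 + K ^ 2 ≤ (400 * (n:ℝ)^2 + 1) ^ 2 := by nlinarith
          _ ≤ ((n:ℝ)^8) ^ 2 := by
              apply pow_le_pow_left₀ (by positivity)
              have : (400:ℝ) * (n:ℝ)^2 + 1 ≤ 401 * (n:ℝ)^2 := by nlinarith
              calc (400:ℝ) * (n:ℝ)^2 + 1 ≤ 401 * (n:ℝ)^2 := this
                _ ≤ (n:ℝ)^6 * (n:ℝ)^2 := by nlinarith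
                _ = (n:ℝ)^8 := by ring
          _ = (n:ℝ) ^ 16 := by ring
      calc Real.log (1 + K ^ 2) ≤ Real.log ((n:ℝ) ^ 16) :=
            Real.log_le_log (by positivity) hKn
        _ = 16 * L := by rw [Real.log_pow]; push_cast; ring
    have hpi3 : (3:ℝ) < Real.pi := Real.pi_gt_three
    have hinv : 1 / Real.pi ≤ 1 / 3 := by
      apply one_div_le_one_div_of_le (by norm_num) hpi3.le
    have hlognn : 0 ≤ Real.log (1 + K ^ 2) := Real.log_nonneg (by nlinarith)
    calc ∫ x, CauchyAux.dens x * min |x| K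
        ≤ (1 / Real.pi) * Real.log (1 + K ^ 2) + 1 := h2
      _ ≤ (1 / 3) * (16 * L) + 1 := by
          have := mul_le_mul hinv hlogK hlognn (by norm_num : (0:ℝ) ≤ 1/3)
          linarith
      _ ≤ 7 * L := by linarith
  have hmom1' : ∀ i, 0 ≤ μ[Y i] := by
    intro i
    apply integral_nonneg
    intro ω
    exact CauchyAux.min_abs_nonneg K _ hK0.le
  have hvar : ∀ i, variance (Y i) μ ≤ 2 * K := by
    intro i
    refine le_trans (variance_le_expectation_sq (hYm i)) ?_
    have h1 : μ[(Y i) ^ 2] = ∫ x, (g x) ^ 2 ∂stdCauchy := by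
      rw [← hmap i]
      rw [integral_map (f := fun x => g x ^ 2) (hae i) ((hgc.pow 2 : Continuous fun x => g x ^ 2).aestronglyMeasurable)]
      rfl
    rw [h1, CauchyAux.integral_stdCauchy (fun x => (g x) ^ 2)]
    exact CauchyAux.moment2_le hK1
  -- the sum of truncated variables
  set S : Ω → ℝ := ∑ i, Y i with hSdef
  have hS2 : MemLp S 2 μ := memLp_finsetSum' univ (fun i _ => hY2 i)
  have hSapp : ∀ ω, S ω = ∑ i, Y i ω := by
    intro ω; rw [hSdef]; simp [Finset.sum_apply]
  have hSmean : μ[S] = ∑ i, μ[Y i] := by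
    rw [hSdef]
    have hfe : (∑ i, Y i) = fun ω => ∑ i, Y i ω := by
      funext ω; simp [Finset.sum_apply]
    rw [hfe, integral_finset_sum univ (fun i _ => (hY2 i).integrable one_le_two)]
  have hm_le : μ[S] ≤ 7 * n * L := by
    rw [hSmean]
    calc ∑ i, μ[Y i] ≤ ∑ _i : Fin n, 7 * L := Finset.sum_le_sum (fun i _ => hmom1 i)
      _ = n * (7 * L) := by rw [Finset.sum_const, Finset.card_univ, Fintype.card_fin]; simp
      _ = 7 * n * L := by ring
  have hm0 : 0 ≤ μ[S] := by
    rw [hSmean]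
    exact Finset.sum_nonneg (fun i _ => hmom1' i)
  have hvarS : variance S μ ≤ 800 * n ^ 2 * L := by
    rw [hSdef]
    rw [IndepFun.variance_sum (fun i _ => hY2 i)
      (fun i _ j _ hij => hYind.indepFun hij)]
    calc ∑ i, variance (Y i) μ ≤ ∑ _i : Fin n, 2 * K :=
          Finset.sum_le_sum (fun i _ => hvar i)
      _ = n * (2 * K) := by rw [Finset.sum_const, Finset.card_univ, Fintype.card_fin]; simp
      _ = 800 * n ^ 2 * L := by rw [hKdef]; ring
  -- Chebyshev
  set c : ℝ := 400 * n * L - μ[S] with hcdef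
  have hc393 : 393 * n * L ≤ c := by
    rw [hcdef]; linarith
  have hc0 : (0:ℝ) < c := by nlinarith
  have hcheb := meas_ge_le_variance_div_sq (μ := μ) hS2 hc0
  have hchebR : variance S μ / c ^ 2 ≤ 1 / (150 * L) := by
    have h1 : variance S μ / c ^ 2 ≤ (800 * n ^ 2 * L) / (393 * n * L) ^ 2 := by
      apply div_le_div₀ (by positivity) hvarS (by positivity)
      apply pow_le_pow_left₀ (by positivity) hc393
    refine le_trans h1 ?_
    rw [div_le_div_iff₀ (by positivity) (by positivity)]
    nlinarith [sq_nonneg ((n:ℝ) * L), hn0, hL0]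
  -- tail bound for each variable
  have htail : ∀ i, μ {ω | K < |X i ω|} ≤ ENNReal.ofReal (1 / K) := by
    intro i
    have hs : MeasurableSet {x : ℝ | K < |x|} :=
      measurableSet_lt measurable_const continuous_abs.measurable
    have : {ω | K < |X i ω|} = X i ⁻¹' {x : ℝ | K < |x|} := rfl
    rw [this, ← Measure.map_apply_of_aemeasurable (hae i) hs, hmap i]
    exact CauchyAux.tail_measure_le hK1
  -- event inclusion
  set G : Set Ω := {ω | ∑ i, |X i ω| ≤ 400 * n * L} with hGdef
  have hsub : Gᶜ ⊆ (⋃ i, {ω | K < |X i ω|}) ∪ {ω | c ≤ |S ω - μ[S]|} := by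
    intro ω hω
    rw [Set.mem_compl_iff, hGdef, Set.mem_setOf_eq, not_le] at hω
    by_cases hbig : ∃ i, K < |X i ω|
    · left
      obtain ⟨i, hi⟩ := hbig
      exact Set.mem_iUnion.mpr ⟨i, hi⟩
    · right
      push_neg at hbig
      have hYeq : ∀ i, Y i ω = |X i ω| := by
        intro i
        show min |X i ω| K = |X i ω|
        exact min_eq_left (hbig i)
      have hSeq : S ω = ∑ i, |X i ω| := by
        rw [hSapp]
        exact Finset.sum_congr rfl (fun i _ => hYeq i)
      rw [Set.mem_setOf_eq]
      have : c ≤ S ω - μ[S] := by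
        rw [hSeq, hcdef]
        linarith
      exact le_trans this (le_abs_self _)
  -- measure of the bad set
  have hbad : μ Gᶜ ≤ ENNReal.ofReal (Real.log L / L) := by
    have h1 : μ Gᶜ ≤ μ (⋃ i, {ω | K < |X i ω|}) + μ {ω | c ≤ |S ω - μ[S]|} :=
      le_trans (measure_mono hsub) (measure_union_le _ _)
    have h2 : μ (⋃ i, {ω | K < |X i ω|}) ≤ ENNReal.ofReal (1 / (400 * L)) := by
      calc μ (⋃ i, {ω | K < |X i ω|}) ≤ ∑' i : Fin n, μ {ω | K < |X i ω|} :=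
            measure_iUnion_le _
        _ = ∑ i : Fin n, μ {ω | K < |X i ω|} := tsum_fintype _
        _ ≤ ∑ _i : Fin n, ENNReal.ofReal (1 / K) :=
            Finset.sum_le_sum (fun i _ => htail i)
        _ = (n : ℝ≥0∞) * ENNReal.ofReal (1 / K) := by
            rw [Finset.sum_const, Finset.card_univ, Fintype.card_fin]
            simp [nsmul_eq_mul]
        _ = ENNReal.ofReal ((n : ℝ) * (1 / K)) := by
            rw [ENNReal.ofReal_mul (by positivity)]
            congr 1
            simp [ENNReal.ofReal_natCast]
        _ = ENNReal.ofReal (1 / (400 * L)) := by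
            congr 1
            rw [hKdef]
            field_simp
        _ ≤ ENNReal.ofReal (1 / (400 * L)) := le_refl _
    have h3 : μ {ω | c ≤ |S ω - μ[S]|} ≤ ENNReal.ofReal (1 / (150 * L)) :=
      le_trans hcheb (ENNReal.ofReal_le_ofReal hchebR)
    have h4 : ENNReal.ofReal (1 / (400 * L)) + ENNReal.ofReal (1 / (150 * L)) =
        ENNReal.ofReal (1 / (400 * L) + 1 / (150 * L)) :=
      (ENNReal.ofReal_add (by positivity) (by positivity)).symm
    have h5 : 1 / (400 * L) + 1 / (150 * L) ≤ Real.log L / L := by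
      have hlogL : (0.01:ℝ) ≤ Real.log L := by
        have := CauchyAux.one_sub_inv_le_log hL0
        have hinv : 1/L ≤ 1/(1.02:ℝ) := one_div_le_one_div_of_le (by norm_num) hL
        have : (1:ℝ) - 1/(1.02:ℝ) ≤ Real.log L := by linarith
        norm_num at this ⊢
        linarith
      rw [div_add_div _ _ (by positivity) (by positivity), div_le_div_iff₀ (by positivity) hL0]
      ring_nf
      nlinarith [hL0, mul_pos hL0 hL0]
    calc μ Gᶜ ≤ ENNReal.ofReal (1 / (400 * L)) + ENNReal.ofReal (1 / (150 * L)) := by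
          exact le_trans h1 (add_le_add h2 h3)
      _ = ENNReal.ofReal (1 / (400 * L) + 1 / (150 * L)) := h4
      _ ≤ ENNReal.ofReal (Real.log L / L) := ENNReal.ofReal_le_ofReal h5
  -- conclude
  have hkey : (1:ℝ≥0∞) ≤ μ G + ENNReal.ofReal (Real.log L / L) := by
    calc (1:ℝ≥0∞) = μ Set.univ := (measure_univ).symm
      _ = μ (G ∪ Gᶜ) := by rw [Set.union_compl_self]
      _ ≤ μ G + μ Gᶜ := measure_union_le _ _
      _ ≤ μ G + ENNReal.ofReal (Real.log L / L) := add_le_add_right hbad _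
  have hgoal : ENNReal.ofReal (1 - Real.log L / L) ≤ μ G := by
    have hnn : 0 ≤ Real.log L / L := div_nonneg (Real.log_nonneg hL1) hL0.le
    rw [ENNReal.ofReal_sub _ hnn, ENNReal.ofReal_one]
    rw [tsub_le_iff_right]
    exact hkey
  exact hgoal
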